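/- Let f be a free polynomial of degree n with root y, characteristic exponents m₁ < ... < m_h, d-sequence (d_i), and r-sequence (r_i). Let y_{<m_i} be the truncation of y below m_i and G_i its minimal polynomial over L (the i-th pseudo root). Then O(f(x, y_{<m_i}(x))) = r_i·d_i/n, and consequently O(f, G_i) = r_i. -/

import Mathlib

/-- `p` is the order of the series with coefficients `z`. -/
def IsOrd {e : ℕ} {K : Type*} [Zero K]
    (le : (Fin e → ℤ) → (Fin e → ℤ) → Prop)
    (z : (Fin e → ℤ) → K) (p : Fin e → ℤ) : Prop :=
  z p ≠ 0 ∧ ∀ q, z q ≠ 0 → le p q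

/-- let `f` be a free polynomial of degree `n` with conjugate
roots `y = y₁,...,y_n`, characteristic exponents `m₁ < ⋯ < m_h`, `d`-sequence
`d₁,...,d_{h+1}` (with `d_i = e_i d_{i+1}`, `#{k : O(y-y_k) ≥ m_i} = d_i`) and
`r`-sequence `r₁ = m₁`, `r_{i+1} = e_i r_i + m_{i+1} - m_i`.  If `t` is the
truncation `y_{<m_i}` of `y` below `m_i`, then since
`f(x, y_{<m_i}) = ∏_k (y_{<m_i} - y_k)`, the order of `f(x, y_{<m_i})` is
`∑_k O(y_{<m_i} - y_k) = d_i r_i` (in numerators of exponents `p/n`, i.e.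
`O(f(x,y_{<m_i})) = r_i d_i / n`), whence `O(f, G_i) = (n/d_i)·O(f(x,y_{<m_i})) = r_i`
for the `i`-th pseudo root `G_i`. -/
theorem stmt_15 (K : Type*) [Field K] (e n h : ℕ) (hn : 0 < n)
    (le : (Fin e → ℤ) → (Fin e → ℤ) → Prop) (hlin : IsLinearOrder (Fin e → ℤ) le)
    (y : Fin n → ((Fin e → ℤ) → K))
    (hsupp : ∀ k p, y k p ≠ 0 ↔ y ⟨0, hn⟩ p ≠ 0)
    (m : Fin h → Fin e → ℤ)
    (hmono : ∀ i j : Fin h, i < j → le (m i) (m j) ∧ m i ≠ m j)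
    (hsuppm : ∀ j, y ⟨0, hn⟩ (m j) ≠ 0)
    (hords : ∀ k, y k ≠ y ⟨0, hn⟩ →
      ∃ j, IsOrd le (fun p => y ⟨0, hn⟩ p - y k p) (m j))
    (d : Fin (h + 1) → ℤ) (E : Fin h → ℤ)
    (hE : ∀ j : Fin h, d j.castSucc = E j * d j.succ)
    (hcount : ∀ j : Fin h,
      (Nat.card {k : Fin n // ∀ q, y ⟨0, hn⟩ q ≠ y k q → le (m j) q} : ℤ) = d j.castSucc)
    (r : Fin h → Fin e → ℤ)
    (hr0 : ∀ hh : 0 < h, r ⟨0, hh⟩ = m ⟨0, hh⟩)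
    (hrrec : ∀ (i : ℕ) (hi : i + 1 < h),
      r ⟨i + 1, hi⟩ = E ⟨i, Nat.lt_of_succ_lt hi⟩ • r ⟨i, Nat.lt_of_succ_lt hi⟩
        + m ⟨i + 1, hi⟩ - m ⟨i, Nat.lt_of_succ_lt hi⟩) :
    ∀ i : Fin h, ∀ t : (Fin e → ℤ) → K,
      (∀ p, (le p (m i) ∧ p ≠ m i → t p = y ⟨0, hn⟩ p) ∧
            (¬(le p (m i) ∧ p ≠ m i) → t p = 0)) →
      ∀ o : Fin n → (Fin e → ℤ),
        (∀ k, IsOrd le (fun p => t p - y k p) (o k)) →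
        ∑ k, o k = d i.castSucc • r i := by
  classical
  have htr : ∀ {a b c : Fin e → ℤ}, le a b → le b c → le a c :=
    fun {a b c} hab hbc => hlin.toIsPartialOrder.toIsPreorder.toIsTrans.trans a b c hab hbc
  have han : ∀ {a b : Fin e → ℤ}, le a b → le b a → a = b :=
    fun {a b} hab hba => hlin.toIsPartialOrder.toAntisymm.antisymm a b hab hba
  have hrf : ∀ a : Fin e → ℤ, le a a := hlin.toIsPartialOrder.toIsPreorder.toRefl.refl
  have hto : ∀ a b : Fin e → ℤ, le a b ∨ le b a := hlin.toTotal.total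
  have hmle : ∀ {a b : Fin h}, a ≤ b → le (m a) (m b) := by
    intro a b hab
    rcases eq_or_lt_of_le hab with he | hl
    · rw [he]; exact hrf _
    · exact (hmono a b hl).1
  have hmge : ∀ {a b : Fin h}, le (m a) (m b) → a ≤ b := by
    intro a b hab
    by_contra hc
    push_neg at hc
    exact (hmono b a hc).2 (han (hmono b a hc).1 hab)
  have huniq : ∀ {z : (Fin e → ℤ) → K} {p q : Fin e → ℤ},
      IsOrd le z p → IsOrd le z q → p = q :=
    fun hp hq => han (hp.2 _ hq.1) (hq.2 _ hp.1)
  have hA : ∀ (j : Fin h) (t : (Fin e → ℤ) → K),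
      (∀ p, (le p (m j) ∧ p ≠ m j → t p = y ⟨0, hn⟩ p) ∧
            (¬(le p (m j) ∧ p ≠ m j) → t p = 0)) →
      ∀ k, (∀ q, y ⟨0, hn⟩ q ≠ y k q → le (m j) q) →
      IsOrd le (fun p => t p - y k p) (m j) := by
    intro j t ht k hk
    constructor
    · show t (m j) - y k (m j) ≠ 0
      rw [(ht (m j)).2 (by simp), zero_sub, neg_ne_zero]
      exact (hsupp k (m j)).mpr (hsuppm j)
    · intro q hq
      have hq' : t q - y k q ≠ 0 := hq
      by_cases hc : le q (m j) ∧ q ≠ m j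
      · rw [(ht q).1 hc] at hq'
        exact hk q (sub_ne_zero.mp hq')
      · rcases hto q (m j) with h1 | h1
        · by_cases he : q = m j
          · rw [he]; exact hrf _
          · exact absurd ⟨h1, he⟩ hc
        · exact h1
  have hC : ∀ (j : Fin h) (t : (Fin e → ℤ) → K),
      (∀ p, (le p (m j) ∧ p ≠ m j → t p = y ⟨0, hn⟩ p) ∧
            (¬(le p (m j) ∧ p ≠ m j) → t p = 0)) →
      ∀ (k) (jj : Fin h), jj < j →
      IsOrd le (fun p => y ⟨0, hn⟩ p - y k p) (m jj) →
      IsOrd le (fun p => t p - y k p) (m jj) := by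
    intro j t ht k jj hlt hord
    have hmm := hmono jj j hlt
    constructor
    · show t (m jj) - y k (m jj) ≠ 0
      rw [(ht (m jj)).1 ⟨hmm.1, hmm.2⟩]
      exact hord.1
    · intro q hq
      have hq' : t q - y k q ≠ 0 := hq
      by_cases hc : le q (m j) ∧ q ≠ m j
      · rw [(ht q).1 hc] at hq'
        exact hord.2 q hq'
      · have hjq : le (m j) q := by
          rcases hto q (m j) with h1 | h1
          · by_cases he : q = m j
            · rw [he]; exact hrf _
            · exact absurd ⟨h1, he⟩ hc
          · exact h1
        exact htr hmm.1 hjq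
  have hB : ∀ (j : Fin h) (k : Fin n), ¬(∀ q, y ⟨0, hn⟩ q ≠ y k q → le (m j) q) →
      ∃ jj : Fin h, jj < j ∧ IsOrd le (fun p => y ⟨0, hn⟩ p - y k p) (m jj) := by
    intro j k hk
    push_neg at hk
    obtain ⟨q1, hq1, hq1'⟩ := hk
    have hne : y k ≠ y ⟨0, hn⟩ := fun he => hq1 (by rw [he])
    obtain ⟨jj, hjj⟩ := hords k hne
    refine ⟨jj, ?_, hjj⟩
    by_contra hc
    push_neg at hc
    exact hq1' (htr (hmle hc) (hjj.2 q1 (sub_ne_zero.mpr hq1)))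
  have hcard : ∀ j : Fin h,
      (((Finset.univ.filter fun k : Fin n => ∀ q, y ⟨0, hn⟩ q ≠ y k q → le (m j) q).card : ℤ))
        = d j.castSucc := by
    intro j
    rw [← hcount j]
    congr 1
    rw [Nat.card_eq_fintype_card, Fintype.card_subtype]
  have key : ∀ (a b c : ℤ) (u v w : Fin e → ℤ), a = c * b →
      a • u + b • (w - v) = b • (c • u + w - v) := by
    intro a b c u v w hab
    funext p
    simp only [Pi.smul_apply, Pi.add_apply, Pi.sub_apply, smul_eq_mul, hab]
    ring
  suffices H : ∀ iv : ℕ, ∀ hiv : iv < h, ∀ t : (Fin e → ℤ) → K,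
      (∀ p, (le p (m ⟨iv, hiv⟩) ∧ p ≠ m ⟨iv, hiv⟩ → t p = y ⟨0, hn⟩ p) ∧
            (¬(le p (m ⟨iv, hiv⟩) ∧ p ≠ m ⟨iv, hiv⟩) → t p = 0)) →
      ∀ o : Fin n → (Fin e → ℤ),
        (∀ k, IsOrd le (fun p => t p - y k p) (o k)) →
        ∑ k, o k = d (⟨iv, hiv⟩ : Fin h).castSucc • r ⟨iv, hiv⟩ by
    intro i t ht o ho
    exact H i.1 i.2 t ht o ho
  intro iv
  induction iv with
  | zero =>
    intro hiv t ht o ho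
    have hall : ∀ k, ∀ q, y ⟨0, hn⟩ q ≠ y k q → le (m ⟨0, hiv⟩) q := by
      intro k q hq
      have hne : y k ≠ y ⟨0, hn⟩ := fun he => hq (by rw [he])
      obtain ⟨jj, hjj⟩ := hords k hne
      exact htr (hmle (Fin.le_def.mpr (Nat.zero_le _))) (hjj.2 q (sub_ne_zero.mpr hq))
    have hok : ∀ k, o k = m ⟨0, hiv⟩ := fun k => huniq (ho k) (hA ⟨0, hiv⟩ t ht k (hall k))
    have hn_eq : (n : ℤ) = d (⟨0, hiv⟩ : Fin h).castSucc := by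
      rw [← hcard ⟨0, hiv⟩, Finset.filter_true_of_mem (fun k _ => hall k),
        Finset.card_univ, Fintype.card_fin]
    calc ∑ k, o k = ∑ _k : Fin n, m ⟨0, hiv⟩ := Finset.sum_congr rfl fun k _ => hok k
      _ = (n : ℤ) • m ⟨0, hiv⟩ := by
          rw [Finset.sum_const, Finset.card_univ, Fintype.card_fin, natCast_zsmul]
      _ = d (⟨0, hiv⟩ : Fin h).castSucc • r ⟨0, hiv⟩ := by rw [hr0 hiv, ← hn_eq]
  | succ iv IH =>
    intro hiv1 t ht o ho
    have hiv : iv < h := Nat.lt_of_succ_lt hiv1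
    have hle12 : (⟨iv, hiv⟩ : Fin h) ≤ ⟨iv + 1, hiv1⟩ := Fin.le_def.mpr (Nat.le_succ iv)
    set tI : (Fin e → ℤ) → K :=
      fun p => if le p (m ⟨iv, hiv⟩) ∧ p ≠ m ⟨iv, hiv⟩ then y ⟨0, hn⟩ p else 0 with htIdef
    have htI : ∀ p, (le p (m ⟨iv, hiv⟩) ∧ p ≠ m ⟨iv, hiv⟩ → tI p = y ⟨0, hn⟩ p) ∧
        (¬(le p (m ⟨iv, hiv⟩) ∧ p ≠ m ⟨iv, hiv⟩) → tI p = 0) :=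
      fun p => ⟨fun hp => if_pos hp, fun hp => if_neg hp⟩
    have hoIex : ∀ k, ∃ p, IsOrd le (fun q => tI q - y k q) p := by
      intro k
      by_cases hk : ∀ q, y ⟨0, hn⟩ q ≠ y k q → le (m ⟨iv, hiv⟩) q
      · exact ⟨m ⟨iv, hiv⟩, hA ⟨iv, hiv⟩ tI htI k hk⟩
      · obtain ⟨jj, hjlt, hord⟩ := hB ⟨iv, hiv⟩ k hk
        exact ⟨m jj, hC ⟨iv, hiv⟩ tI htI k jj hjlt hord⟩
    choose oI hoI using hoIex
    have hsumI := IH hiv tI htI oI hoI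
    have hkey : ∀ k, o k = oI k +
        (if (∀ q, y ⟨0, hn⟩ q ≠ y k q → le (m ⟨iv + 1, hiv1⟩) q)
          then m ⟨iv + 1, hiv1⟩ - m ⟨iv, hiv⟩ else 0) := by
      intro k
      by_cases hk2 : ∀ q, y ⟨0, hn⟩ q ≠ y k q → le (m ⟨iv + 1, hiv1⟩) q
      · rw [if_pos hk2]
        have hk1 : ∀ q, y ⟨0, hn⟩ q ≠ y k q → le (m ⟨iv, hiv⟩) q :=
          fun q hq => htr (hmle hle12) (hk2 q hq)
        rw [huniq (ho k) (hA ⟨iv + 1, hiv1⟩ t ht k hk2),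
          huniq (hoI k) (hA ⟨iv, hiv⟩ tI htI k hk1)]
        abel
      · rw [if_neg hk2, add_zero]
        obtain ⟨jj, hjlt, hord⟩ := hB ⟨iv + 1, hiv1⟩ k hk2
        rw [huniq (ho k) (hC ⟨iv + 1, hiv1⟩ t ht k jj hjlt hord)]
        by_cases hk1 : ∀ q, y ⟨0, hn⟩ q ≠ y k q → le (m ⟨iv, hiv⟩) q
        · have h1 : (⟨iv, hiv⟩ : Fin h) ≤ jj := hmge (hk1 (m jj) (sub_ne_zero.mp hord.1))
          have h2 : jj ≤ (⟨iv, hiv⟩ : Fin h) :=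
            Fin.le_def.mpr (Nat.lt_succ_iff.mp (Fin.lt_def.mp hjlt))
          have hjj : jj = (⟨iv, hiv⟩ : Fin h) := le_antisymm h2 h1
          rw [huniq (hoI k) (hA ⟨iv, hiv⟩ tI htI k hk1), hjj]
        · obtain ⟨jj2, hjlt2, hord2⟩ := hB ⟨iv, hiv⟩ k hk1
          rw [huniq (hoI k) (hC ⟨iv, hiv⟩ tI htI k jj2 hjlt2 hord2), huniq hord2 hord]
    calc ∑ k, o k
        = ∑ k, (oI k +
            (if (∀ q, y ⟨0, hn⟩ q ≠ y k q → le (m ⟨iv + 1, hiv1⟩) q)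
              then m ⟨iv + 1, hiv1⟩ - m ⟨iv, hiv⟩ else 0)) :=
          Finset.sum_congr rfl fun k _ => hkey k
      _ = (∑ k, oI k) + ∑ k,
            (if (∀ q, y ⟨0, hn⟩ q ≠ y k q → le (m ⟨iv + 1, hiv1⟩) q)
              then m ⟨iv + 1, hiv1⟩ - m ⟨iv, hiv⟩ else 0) := Finset.sum_add_distrib
      _ = d (⟨iv, hiv⟩ : Fin h).castSucc • r ⟨iv, hiv⟩
            + d (⟨iv + 1, hiv1⟩ : Fin h).castSucc • (m ⟨iv + 1, hiv1⟩ - m ⟨iv, hiv⟩) := by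
          rw [hsumI, ← Finset.sum_filter, Finset.sum_const, ← hcard ⟨iv + 1, hiv1⟩,
            natCast_zsmul]
      _ = d (⟨iv + 1, hiv1⟩ : Fin h).castSucc • r ⟨iv + 1, hiv1⟩ := by
          rw [hrrec iv hiv1]
          exact key _ _ _ _ _ _ (hE ⟨iv, Nat.lt_of_succ_lt hiv1⟩)
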